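/- Mollification of coarsely Lipschitz maps (the paper's Proposition 'Lipschitz', in the Euclidean setting): For every n ≥ 1 there is a constant C, depending only on n, with the following property. Let E be a real Banach space, L ≥ 0, and let f : ℝⁿ → E be a strongly measurable map that is L-coarsely Lipschitz, i.e. ‖f x − f z‖ ≤ L·(‖x − z‖ + 1) for all x, z ∈ ℝⁿ. Then there exists a map g : ℝⁿ → E that is Lipschitz with constant C·L and satisfies ‖g x − f x‖ ≤ 2·L for every x ∈ ℝⁿ. (One may take g x to be the Bochner average of f over the unit ball centered at x.) -/

import Mathlib

open MeasureTheory Metric Set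

private lemma ball_diff_measure_bound (n : ℕ) (hn : 1 ≤ n)
    (x z : EuclideanSpace ℝ (Fin n)) (hd : ‖x - z‖ < 1) :
    (volume (ball x 1 \ ball z 1)).toReal ≤
      n * ‖x - z‖ * (volume (ball (0 : EuclideanSpace ℝ (Fin n)) 1)).toReal := by
  have : Nonempty (Fin n) := ⟨⟨0, hn⟩⟩
  have : Nontrivial (EuclideanSpace ℝ (Fin n)) := inferInstance
  set d := ‖x - z‖ with hdd
  have hd0 : 0 ≤ d := norm_nonneg _
  have hsub : ball x (1 - d) ⊆ ball z 1 := by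
    intro y hy
    rw [mem_ball] at hy ⊢
    have h3 : dist y z ≤ dist y x + dist x z := dist_triangle y x z
    rw [dist_eq_norm x z] at h3
    linarith
  have hsub2 : ball x 1 \ ball z 1 ⊆ ball x 1 \ ball x (1 - d) :=
    diff_subset_diff_right hsub
  have hmono := measure_mono (μ := volume) hsub2
  have hfin : volume (ball x 1 \ ball x (1 - d)) ≠ ⊤ :=
    ((measure_mono diff_subset).trans_lt measure_ball_lt_top).ne
  have hle : volume (ball x (1 - d)) ≤ volume (ball x 1) :=
    measure_mono (ball_subset_ball (by linarith))
  have hdiff : volume (ball x 1 \ ball x (1 - d)) =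
      volume (ball x 1) - volume (ball x (1 - d)) :=
    measure_diff (ball_subset_ball (by linarith)) measurableSet_ball.nullMeasurableSet
      measure_ball_lt_top.ne
  have hfr : Module.finrank ℝ (EuclideanSpace ℝ (Fin n)) = n := finrank_euclideanSpace_fin
  have hb1 : volume (ball x 1) =
      ENNReal.ofReal ((1:ℝ) ^ n) * volume (ball (0 : EuclideanSpace ℝ (Fin n)) 1) := by
    rw [Measure.addHaar_ball volume x (by norm_num : (0:ℝ) ≤ 1), hfr]
  have hb2 : volume (ball x (1 - d)) =
      ENNReal.ofReal ((1 - d) ^ n) * volume (ball (0 : EuclideanSpace ℝ (Fin n)) 1) := by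
    rw [Measure.addHaar_ball volume x (by linarith : (0:ℝ) ≤ 1 - d), hfr]
  set V := volume (ball (0 : EuclideanSpace ℝ (Fin n)) 1) with hV
  have hVfin : V ≠ ⊤ := measure_ball_lt_top.ne
  have hVr : 0 ≤ V.toReal := ENNReal.toReal_nonneg
  have h1d : (0:ℝ) ≤ (1 - d) ^ n := pow_nonneg (by linarith) n
  have hb1fin : volume (ball x 1) ≠ ⊤ := measure_ball_lt_top.ne
  have ht1 : (volume (ball x 1)).toReal = V.toReal := by
    rw [hb1, ENNReal.toReal_mul, ENNReal.toReal_ofReal (by norm_num : (0:ℝ) ≤ (1:ℝ)^n)]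
    norm_num
  have ht2 : (volume (ball x (1 - d))).toReal = (1 - d) ^ n * V.toReal := by
    rw [hb2, ENNReal.toReal_mul, ENNReal.toReal_ofReal h1d]
  have hcalc : (volume (ball x 1 \ ball x (1 - d))).toReal
      = (1 - (1 - d) ^ n) * V.toReal := by
    rw [hdiff, ENNReal.toReal_sub_of_le hle hb1fin, ht1, ht2]
    ring
  have hbern : 1 + (n : ℝ) * (-d) ≤ (1 + -d) ^ n := one_add_mul_le_pow (by linarith) n
  rw [show (1:ℝ) + -d = 1 - d from by ring] at hbern
  have hmain : (1 - (1 - d) ^ n) * V.toReal ≤ n * d * V.toReal := by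
    have h2 : 1 - (1 - d) ^ n ≤ n * d := by linarith
    nlinarith
  calc (volume (ball x 1 \ ball z 1)).toReal
      ≤ (volume (ball x 1 \ ball x (1 - d))).toReal := ENNReal.toReal_mono hfin hmono
    _ = (1 - (1 - d) ^ n) * V.toReal := hcalc
    _ ≤ n * d * V.toReal := hmain

/-- **Mollification of coarsely Lipschitz maps (Euclidean setting).**
For every `n ≥ 1` there is a constant `C`, depending only on `n`, such that
every strongly measurable `L`-coarsely Lipschitz map `f : ℝⁿ → E` into a real
Banach space `E` lies within distance `2·L` of a map `g` that is Lipschitz with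
constant `C·L`. -/
theorem mollification_of_coarse_lipschitz (n : ℕ) (hn : 1 ≤ n) :
    ∃ C : ℝ, 0 < C ∧
      ∀ (E : Type) (_ : NormedAddCommGroup E) (_ : NormedSpace ℝ E)
        (_ : CompleteSpace E) (L : ℝ), 0 ≤ L →
        ∀ f : EuclideanSpace ℝ (Fin n) → E,
          MeasureTheory.StronglyMeasurable f →
          (∀ x z, ‖f x - f z‖ ≤ L * (‖x - z‖ + 1)) →
          ∃ g : EuclideanSpace ℝ (Fin n) → E,
            (∀ x z, ‖g x - g z‖ ≤ C * L * ‖x - z‖) ∧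
            (∀ x, ‖g x - f x‖ ≤ 2 * L) := by
  have hn' : (1:ℝ) ≤ (n:ℝ) := by exact_mod_cast hn
  refine ⟨6 * n, by linarith, ?_⟩
  intro E _ _ _ L hL f hf hco
  have : Nonempty (Fin n) := ⟨⟨0, hn⟩⟩
  have hN : Nontrivial (EuclideanSpace ℝ (Fin n)) := inferInstance
  set μ : Measure (EuclideanSpace ℝ (Fin n)) := volume with hμ
  set V : ℝ := (μ (ball (0 : EuclideanSpace ℝ (Fin n)) 1)).toReal with hV
  have hVpos : 0 < V :=
    ENNReal.toReal_pos (measure_ball_pos μ _ one_pos).ne' measure_ball_lt_top.ne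
  have hvolx : ∀ x : EuclideanSpace ℝ (Fin n), (μ (ball x 1)).toReal = V := fun x => by
    rw [hV, Measure.addHaar_ball_center μ x 1]
  have hint : ∀ x : EuclideanSpace ℝ (Fin n), IntegrableOn f (ball x 1) μ := by
    intro x
    refine Measure.integrableOn_of_bounded (M := 2 * L + ‖f x‖)
      measure_ball_lt_top.ne hf.aestronglyMeasurable ?_
    refine (ae_restrict_iff' measurableSet_ball).2 (ae_of_all _ fun y hy => ?_)
    have hyx : ‖y - x‖ < 1 := mem_ball_iff_norm.1 hy
    have h1 : ‖f y‖ ≤ ‖f y - f x‖ + ‖f x‖ := by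
      simpa using norm_add_le (f y - f x) (f x)
    have h2 := hco y x
    nlinarith [norm_nonneg (y - x)]
  have hbound2L : ∀ x : EuclideanSpace ℝ (Fin n), ∀ y ∈ ball x 1, ‖f y - f x‖ ≤ 2 * L := by
    intro x y hy
    have hyx : ‖y - x‖ < 1 := mem_ball_iff_norm.1 hy
    have h2 := hco y x
    nlinarith [norm_nonneg (y - x)]
  set g : EuclideanSpace ℝ (Fin n) → E := fun x => V⁻¹ • ∫ y in ball x 1, f y ∂μ with hg
  have hintc : ∀ (x c : EuclideanSpace ℝ (Fin n)),
      IntegrableOn (fun y => f y - f c) (ball x 1) μ := fun x c =>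
    (hint x).sub (integrableOn_const measure_ball_lt_top.ne)
  have hsubint : ∀ (x c : EuclideanSpace ℝ (Fin n)),
      ∫ y in ball x 1, (f y - f c) ∂μ = (∫ y in ball x 1, f y ∂μ) - V • f c := by
    intro x c
    rw [integral_sub (hint x) (integrableOn_const measure_ball_lt_top.ne),
      setIntegral_const, measureReal_def, hvolx x]
  have hkey : ∀ x : EuclideanSpace ℝ (Fin n),
      g x - f x = V⁻¹ • ∫ y in ball x 1, (f y - f x) ∂μ := by
    intro x
    rw [hsubint x x, smul_sub, smul_smul, inv_mul_cancel₀ hVpos.ne', one_smul]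
  have hnear : ∀ x : EuclideanSpace ℝ (Fin n), ‖g x - f x‖ ≤ 2 * L := by
    intro x
    rw [hkey x, norm_smul, norm_inv, Real.norm_eq_abs, abs_of_pos hVpos]
    have hb : ‖∫ y in ball x 1, (f y - f x) ∂μ‖ ≤ (2 * L) * (μ (ball x 1)).toReal :=
      norm_setIntegral_le_of_norm_le_const measure_ball_lt_top
        (hbound2L x)
    rw [hvolx x] at hb
    calc V⁻¹ * ‖∫ y in ball x 1, (f y - f x) ∂μ‖ ≤ V⁻¹ * ((2 * L) * V) := by
          exact mul_le_mul_of_nonneg_left hb (by positivity)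
      _ = 2 * L := by field_simp
  refine ⟨g, ?_, hnear⟩
  intro x z
  set d := ‖x - z‖ with hdd
  have hd0 : 0 ≤ d := norm_nonneg _
  rcases le_or_gt 1 d with hd | hd
  · -- far case: use the triangle inequality through f
    have h1 := hnear x
    have h2 := hnear z
    have h3 := hco x z
    have hsplit : g x - g z = (g x - f x) + (f x - f z) + -(g z - f z) := by abel
    have h4 : ‖g x - g z‖ ≤ ‖g x - f x‖ + ‖f x - f z‖ + ‖g z - f z‖ := by
      rw [hsplit]
      refine (norm_add_le _ _).trans ?_
      rw [norm_neg]
      gcongr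
      exact norm_add_le _ _
    have e1 : 0 ≤ L * (d - 1) := mul_nonneg hL (by linarith)
    have e2 : 0 ≤ ((n:ℝ) - 1) * (L * d) := mul_nonneg (by linarith) (mul_nonneg hL hd0)
    linarith
  · -- near case: compare the averages over overlapping balls
    set Bx := ball x 1 with hBx
    set Bz := ball z 1 with hBz
    have hsplx : ∫ y in Bx ∩ Bz, (f y - f x) ∂μ + ∫ y in Bx \ Bz, (f y - f x) ∂μ
        = ∫ y in Bx, (f y - f x) ∂μ :=
      integral_inter_add_diff measurableSet_ball (hintc x x)
    have hsplz : ∫ y in Bz ∩ Bx, (f y - f x) ∂μ + ∫ y in Bz \ Bx, (f y - f x) ∂μ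
        = ∫ y in Bz, (f y - f x) ∂μ :=
      integral_inter_add_diff measurableSet_ball (hintc z x)
    rw [inter_comm] at hsplz
    have hgdiff : g x - g z =
        V⁻¹ • (∫ y in Bx \ Bz, (f y - f x) ∂μ - ∫ y in Bz \ Bx, (f y - f x) ∂μ) := by
      have h5 : g x - g z = V⁻¹ • ((∫ y in Bx, f y ∂μ) - ∫ y in Bz, f y ∂μ) :=
        (smul_sub _ _ _).symm
      have h6 : (∫ y in Bx, f y ∂μ) - ∫ y in Bz, f y ∂μ
          = (∫ y in Bx, (f y - f x) ∂μ) - ∫ y in Bz, (f y - f x) ∂μ := by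
        rw [hsubint x x, hsubint z x]
        abel
      rw [h5, h6, ← hsplx, ← hsplz]
      congr 1
      abel
    have hm1 : (μ (Bx \ Bz)).toReal ≤ n * d * V :=
      ball_diff_measure_bound n hn x z hd
    have hm2 : (μ (Bz \ Bx)).toReal ≤ n * d * V := by
      have := ball_diff_measure_bound n hn z x (by rwa [norm_sub_rev])
      rwa [norm_sub_rev z x] at this
    have hfin1 : μ (Bx \ Bz) < ⊤ := (measure_mono diff_subset).trans_lt measure_ball_lt_top
    have hfin2 : μ (Bz \ Bx) < ⊤ := (measure_mono diff_subset).trans_lt measure_ball_lt_top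
    have hI1 : ‖∫ y in Bx \ Bz, (f y - f x) ∂μ‖ ≤ (2 * L) * (μ (Bx \ Bz)).toReal :=
      norm_setIntegral_le_of_norm_le_const hfin1
        (fun y hy => hbound2L x y hy.1)
    have hI2 : ‖∫ y in Bz \ Bx, (f y - f x) ∂μ‖ ≤ (L * (d + 2)) * (μ (Bz \ Bx)).toReal := by
      refine norm_setIntegral_le_of_norm_le_const hfin2
        (fun y hy => ?_)
      have hyz : ‖y - z‖ < 1 := mem_ball_iff_norm.1 hy.1
      have h2 := hco y x
      have htri : ‖y - x‖ ≤ ‖y - z‖ + ‖z - x‖ := norm_sub_le_norm_sub_add_norm_sub y z x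
      rw [norm_sub_rev z x] at htri
      nlinarith
    have hnn1 : (0:ℝ) ≤ (μ (Bx \ Bz)).toReal := ENNReal.toReal_nonneg
    have hnn2 : (0:ℝ) ≤ (μ (Bz \ Bx)).toReal := ENNReal.toReal_nonneg
    have hnorm : ‖g x - g z‖ ≤
        V⁻¹ * ((2 * L) * (n * d * V) + (L * (d + 2)) * (n * d * V)) := by
      rw [hgdiff, norm_smul, norm_inv, Real.norm_eq_abs, abs_of_pos hVpos]
      have h7 : ‖∫ y in Bx \ Bz, (f y - f x) ∂μ - ∫ y in Bz \ Bx, (f y - f x) ∂μ‖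
          ≤ (2 * L) * (n * d * V) + (L * (d + 2)) * (n * d * V) := by
        refine (norm_sub_le _ _).trans ?_
        have b1 : ‖∫ y in Bx \ Bz, (f y - f x) ∂μ‖ ≤ (2 * L) * (n * d * V) :=
          hI1.trans (mul_le_mul_of_nonneg_left hm1 (by linarith))
        have b2 : ‖∫ y in Bz \ Bx, (f y - f x) ∂μ‖ ≤ (L * (d + 2)) * (n * d * V) :=
          hI2.trans (mul_le_mul_of_nonneg_left hm2 (mul_nonneg hL (by linarith)))
        linarith
      exact mul_le_mul_of_nonneg_left h7 (by positivity)
    have heq : V⁻¹ * ((2 * L) * (n * d * V) + (L * (d + 2)) * (n * d * V))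
        = (n:ℝ) * L * d * (d + 4) := by
      field_simp
      ring
    rw [heq] at hnorm
    have e3 : 0 ≤ (n:ℝ) * L * d := by positivity
    nlinarith
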